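/- Let γ < 1 and ε be real numbers, and define F(x) = Σ_{k=0}^∞ [ (ε/2)_k (1 + (ε−γ)/2)_k / ( (1 − γ/2)_k k! ) ] x^k, where (x)_k is the ascending Pochhammer symbol (this series converges for |x| < 1). Then the function u(z) = ∫_0^z t^(−γ) (1−t)^ε F(t²) dt satisfies, for every z ∈ (0,1), the general Heun equation with a = −1, δ = −ε, q = (γ−1)ε and αβ = 0: u''(z) + ( γ/z − ε/(z−1) + ε/(z+1) ) u'(z) − (γ−1)ε/( z(z−1)(z+1) ) u(z) = 0. -/

import Mathlib

open Filter Set MeasureTheory Real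
open scoped Topology

noncomputable def hgCoeff (a b c0 : ℝ) (k : ℕ) : ℝ :=
  (ascPochhammer ℝ k).eval a * (ascPochhammer ℝ k).eval b
    / ((ascPochhammer ℝ k).eval c0 * (k.factorial : ℝ))

noncomputable def hgF (a b c0 x : ℝ) : ℝ := ∑' k : ℕ, hgCoeff a b c0 k * x ^ k

noncomputable def hgG (a b c0 x : ℝ) : ℝ :=
  ∑' k : ℕ, ((k : ℝ) + 1) * hgCoeff a b c0 (k + 1) * x ^ k

noncomputable def hgH (a b c0 x : ℝ) : ℝ :=
  ∑' k : ℕ, ((k : ℝ) + 1) * ((k : ℝ) + 2) * hgCoeff a b c0 (k + 2) * x ^ k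

variable {a b c0 : ℝ}

lemma hgCoeff_rec (hc0 : 0 < c0) (k : ℕ) :
    hgCoeff a b c0 (k + 1) * (((k : ℝ) + 1) * (c0 + k)) =
      hgCoeff a b c0 k * ((a + k) * (b + k)) := by
  have h1 : (0:ℝ) < (ascPochhammer ℝ k).eval c0 := ascPochhammer_pos k c0 hc0
  have h2 : ((k.factorial : ℝ)) ≠ 0 := Nat.cast_ne_zero.2 k.factorial_ne_zero
  have h3 : (0:ℝ) < c0 + k := by positivity
  have h4 : (0:ℝ) < (k : ℝ) + 1 := by positivity
  simp only [hgCoeff, ascPochhammer_succ_eval, Nat.factorial_succ]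
  push_cast
  field_simp

lemma hgCoeff_abs_succ (hc0 : 0 < c0) (k : ℕ) :
    |hgCoeff a b c0 (k + 1)| =
      |hgCoeff a b c0 k| * ((|a + k| * |b + k|) / (((k : ℝ) + 1) * (c0 + k))) := by
  have hpos : (0:ℝ) < ((k : ℝ) + 1) * (c0 + k) := by positivity
  have h := congrArg (|·|) (hgCoeff_rec (a := a) (b := b) hc0 k)
  simp only [abs_mul, abs_of_pos hpos] at h
  field_simp
  linarith [h]

lemma ratio_tendsto (t s : ℝ) (hs : 0 < s) :
    Tendsto (fun k : ℕ => (t + k) / (s + k)) atTop (𝓝 1) := by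
  have h1 : Tendsto (fun k : ℕ => (s + (k : ℝ))) atTop atTop :=
    tendsto_atTop_add_const_left _ s tendsto_natCast_atTop_atTop
  have h2 : Tendsto (fun k : ℕ => (t - s) / (s + (k : ℝ))) atTop (𝓝 0) :=
    Tendsto.div_atTop tendsto_const_nhds h1
  have h3 : Tendsto (fun k : ℕ => 1 + (t - s) / (s + (k : ℝ))) atTop (𝓝 (1 + 0)) :=
    tendsto_const_nhds.add h2
  rw [add_zero] at h3
  refine h3.congr fun k => ?_
  have hk : (0:ℝ) < s + k := by positivity
  field_simp
  ring

lemma ratio_abs_tendsto (t s : ℝ) (hs : 0 < s) :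
    Tendsto (fun k : ℕ => |t + k| / (s + k)) atTop (𝓝 1) := by
  refine (ratio_tendsto t s hs).congr' ?_
  filter_upwards [eventually_ge_atTop ⌈-t⌉₊] with k hk
  have h1 : -t ≤ (k : ℝ) := le_trans (Nat.le_ceil _) (Nat.cast_le.2 hk)
  rw [abs_of_nonneg (by linarith)]

lemma hgSummable_abs (hc0 : 0 < c0) (m : ℕ) (p : ℕ → ℝ) (hp : ∀ k, 0 < p k)
    (hpr : Tendsto (fun k => p (k + 1) / p k) atTop (𝓝 1)) {x : ℝ} (hx0 : 0 ≤ x) (hx : x < 1) :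
    Summable (fun k => p k * |hgCoeff a b c0 (k + m)| * x ^ k) := by
  have hl : (1 + x) / 2 < 1 := by linarith
  apply summable_of_ratio_norm_eventually_le hl
  have hQ : Tendsto (fun j : ℕ => (|a + j| * |b + j|) / (((j : ℝ) + 1) * (c0 + j)))
      atTop (𝓝 1) := by
    have := (ratio_abs_tendsto a 1 one_pos).mul (ratio_abs_tendsto b c0 hc0)
    rw [one_mul] at this
    refine this.congr fun j => ?_
    rw [div_mul_div_comm]
    ring_nf
  have hQm : Tendsto (fun k : ℕ => (|a + (k + m : ℕ)| * |b + (k + m : ℕ)|) /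
      ((((k + m : ℕ) : ℝ) + 1) * (c0 + (k + m : ℕ)))) atTop (𝓝 1) :=
    hQ.comp (tendsto_add_atTop_nat m)
  have hfull : Tendsto (fun k : ℕ => (p (k + 1) / p k) *
      ((|a + (k + m : ℕ)| * |b + (k + m : ℕ)|) /
        ((((k + m : ℕ) : ℝ) + 1) * (c0 + (k + m : ℕ)))) * x) atTop (𝓝 x) := by
    have := (hpr.mul hQm).mul_const x
    simpa using this
  have hev := hfull.eventually_le_const (show x < (1 + x)/2 by linarith)
  filter_upwards [hev] with k hk
  have hppos := hp k
  have hden : (0:ℝ) < (((k + m : ℕ) : ℝ) + 1) * (c0 + (k + m : ℕ)) := by positivity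
  have hterm : ‖p (k + 1) * |hgCoeff a b c0 (k + 1 + m)| * x ^ (k + 1)‖ =
      ‖p k * |hgCoeff a b c0 (k + m)| * x ^ k‖ *
        ((p (k + 1) / p k) * ((|a + (k + m : ℕ)| * |b + (k + m : ℕ)|) /
          ((((k + m : ℕ) : ℝ) + 1) * (c0 + (k + m : ℕ)))) * x) := by
    have e : k + 1 + m = (k + m) + 1 := by omega
    rw [e, hgCoeff_abs_succ hc0 (k + m)]
    have hn1 : ‖p (k + 1) * (|hgCoeff a b c0 (k + m)| *
        ((|a + (k + m : ℕ)| * |b + (k + m : ℕ)|) /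
          ((((k + m : ℕ) : ℝ) + 1) * (c0 + (k + m : ℕ))))) * x ^ (k + 1)‖ =
        p (k + 1) * (|hgCoeff a b c0 (k + m)| *
        ((|a + (k + m : ℕ)| * |b + (k + m : ℕ)|) /
          ((((k + m : ℕ) : ℝ) + 1) * (c0 + (k + m : ℕ))))) * x ^ (k + 1) := by
      rw [Real.norm_eq_abs, abs_of_nonneg]
      exact mul_nonneg (mul_nonneg (hp (k+1)).le (by positivity)) (by positivity)
    have hn2 : ‖p k * |hgCoeff a b c0 (k + m)| * x ^ k‖ =
        p k * |hgCoeff a b c0 (k + m)| * x ^ k := by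
      rw [Real.norm_eq_abs, abs_of_nonneg]
      exact mul_nonneg (mul_nonneg (hp k).le (abs_nonneg _)) (by positivity)
    rw [hn1, hn2]
    push_cast
    field_simp
    ring
  rw [hterm]
  have hnn : (0:ℝ) ≤ ‖p k * |hgCoeff a b c0 (k + m)| * x ^ k‖ := norm_nonneg _
  calc ‖p k * |hgCoeff a b c0 (k + m)| * x ^ k‖ *
        ((p (k + 1) / p k) * ((|a + (k + m : ℕ)| * |b + (k + m : ℕ)|) /
          ((((k + m : ℕ) : ℝ) + 1) * (c0 + (k + m : ℕ)))) * x)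
      ≤ ‖p k * |hgCoeff a b c0 (k + m)| * x ^ k‖ * ((1 + x)/2) := by
        exact mul_le_mul_of_nonneg_left hk hnn
    _ = (1 + x)/2 * ‖p k * |hgCoeff a b c0 (k + m)| * x ^ k‖ := by ring

lemma hgSummable (hc0 : 0 < c0) (m : ℕ) (p : ℕ → ℝ) (hp : ∀ k, 0 < p k)
    (hpr : Tendsto (fun k => p (k + 1) / p k) atTop (𝓝 1)) {x : ℝ} (hx : |x| < 1) :
    Summable (fun k => p k * hgCoeff a b c0 (k + m) * x ^ k) := by
  apply Summable.of_norm_bounded (hgSummable_abs hc0 m p hp hpr (abs_nonneg x) hx)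
  intro k
  rw [Real.norm_eq_abs, abs_mul, abs_mul, abs_pow, abs_of_pos (hp k)]

lemma hgF_summable (hc0 : 0 < c0) {x : ℝ} (hx : |x| < 1) :
    Summable (fun k => hgCoeff a b c0 k * x ^ k) := by
  have hpr : Tendsto (fun k : ℕ => (1:ℝ) / 1) atTop (𝓝 1) := by simp
  have h := hgSummable (a := a) (b := b) hc0 0 (fun _ => 1) (fun _ => one_pos) hpr hx
  simpa using h

lemma hgG_summable (hc0 : 0 < c0) {x : ℝ} (hx : |x| < 1) :
    Summable (fun k : ℕ => ((k:ℝ) + 1) * hgCoeff a b c0 (k + 1) * x ^ k) := by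
  have hpr : Tendsto (fun k : ℕ => ((((k+1) : ℕ):ℝ) + 1) / ((k:ℝ) + 1)) atTop (𝓝 1) := by
    refine (ratio_tendsto 2 1 one_pos).congr fun k => ?_
    have h1 : (1:ℝ) + k ≠ 0 := by positivity
    have h2 : ((k:ℝ)) + 1 ≠ 0 := by positivity
    push_cast
    field_simp
    ring
  have h := hgSummable (a := a) (b := b) hc0 1 (fun k => (k:ℝ) + 1)
    (fun k => by positivity) hpr hx
  simpa using h

lemma hgH_summable (hc0 : 0 < c0) {x : ℝ} (hx : |x| < 1) :
    Summable (fun k : ℕ => ((k:ℝ) + 1) * ((k:ℝ) + 2) * hgCoeff a b c0 (k + 2) * x ^ k) := by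
  have hpr : Tendsto (fun k : ℕ =>
      (((((k+1) : ℕ)):ℝ) + 1) * (((((k+1) : ℕ)):ℝ) + 2) / (((k:ℝ) + 1) * ((k:ℝ) + 2)))
      atTop (𝓝 1) := by
    refine (ratio_tendsto 3 1 one_pos).congr fun k => ?_
    have h1 : (1:ℝ) + k ≠ 0 := by positivity
    have h2 : ((k:ℝ)) + 1 ≠ 0 := by positivity
    have h3 : ((k:ℝ)) + 2 ≠ 0 := by positivity
    push_cast
    field_simp
    ring
  have h := hgSummable (a := a) (b := b) hc0 2 (fun k => ((k:ℝ) + 1) * ((k:ℝ) + 2))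
    (fun k => by positivity) hpr hx
  simpa using h

lemma hgDerivBound_summable (hc0 : 0 < c0) {r : ℝ} (h0 : 0 ≤ r) (h1 : r < 1) :
    Summable (fun n : ℕ => (n:ℝ) * |hgCoeff a b c0 n| * r ^ (n - 1)) := by
  rw [← summable_nat_add_iff 1]
  have h := hgSummable_abs (a := a) (b := b) hc0 1 (fun k => (k:ℝ) + 1)
    (fun k => by positivity) (by
      refine (ratio_tendsto 2 1 one_pos).congr fun k => ?_
      have h1 : (1:ℝ) + k ≠ 0 := by positivity
      have h2 : ((k:ℝ)) + 1 ≠ 0 := by positivity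
      push_cast; field_simp; ring) h0 h1
  refine h.congr fun n => ?_
  push_cast [Nat.add_sub_cancel]
  ring

lemma hgDerivBound2_summable (hc0 : 0 < c0) {r : ℝ} (h0 : 0 ≤ r) (h1 : r < 1) :
    Summable (fun n : ℕ => (n:ℝ) * |((n:ℝ) + 1) * hgCoeff a b c0 (n + 1)| * r ^ (n - 1)) := by
  rw [← summable_nat_add_iff 1]
  have h := hgSummable_abs (a := a) (b := b) hc0 2 (fun k => ((k:ℝ) + 1) * ((k:ℝ) + 2))
    (fun k => by positivity) (by
      refine (ratio_tendsto 3 1 one_pos).congr fun k => ?_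
      have h1 : (1:ℝ) + k ≠ 0 := by positivity
      have h2 : ((k:ℝ)) + 1 ≠ 0 := by positivity
      have h3 : ((k:ℝ)) + 2 ≠ 0 := by positivity
      push_cast; field_simp; ring) h0 h1
  refine h.congr fun n => ?_
  have e : |((n:ℝ) + 1 + 1) * hgCoeff a b c0 (n + 1 + 1)| =
      ((n:ℝ) + 2) * |hgCoeff a b c0 (n + 2)| := by
    rw [show (n:ℝ) + 1 + 1 = (n:ℝ) + 2 by ring, show n + 1 + 1 = n + 2 from rfl, abs_mul,
      abs_of_pos (by positivity : (0:ℝ) < (n:ℝ) + 2)]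
  push_cast [Nat.add_sub_cancel]
  rw [e]
  ring

lemma hgF_hasDerivAt (hc0 : 0 < c0) {x : ℝ} (hx : |x| < 1) :
    HasDerivAt (hgF a b c0) (hgG a b c0 x) x := by
  set r := (|x| + 1) / 2 with hr
  have habs := abs_nonneg x
  have hr0 : 0 ≤ r := by positivity
  have hrx : |x| < r := by rw [hr]; linarith
  have hr1 : r < 1 := by rw [hr]; linarith
  have hball : x ∈ Metric.ball (0:ℝ) r := by
    simpa [Real.norm_eq_abs] using hrx
  have key := hasDerivAt_tsum_of_isPreconnected
    (hgDerivBound_summable (a := a) (b := b) hc0 hr0 hr1)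
    (Metric.isOpen_ball (x := (0:ℝ)) (ε := r))
    ((convex_ball (0:ℝ) r).isPreconnected)
    (g := fun (n : ℕ) (y : ℝ) => hgCoeff a b c0 n * y ^ n)
    (g' := fun (n : ℕ) (y : ℝ) => hgCoeff a b c0 n * ((n:ℝ) * y ^ (n - 1)))
    (fun n y _ => (hasDerivAt_pow n y).const_mul _)
    (fun n y hy => by
      have hyr : |y| ≤ r := by
        have := Metric.mem_ball.1 hy
        rw [Real.dist_eq, sub_zero] at this
        exact this.le
      have hpow : |y| ^ (n - 1) ≤ r ^ (n - 1) := pow_le_pow_left₀ (abs_nonneg y) hyr _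
      calc ‖hgCoeff a b c0 n * ((n:ℝ) * y ^ (n - 1))‖
          = |hgCoeff a b c0 n| * ((n:ℝ) * |y| ^ (n - 1)) := by
            rw [Real.norm_eq_abs, abs_mul, abs_mul, abs_pow, Nat.abs_cast]
        _ ≤ (n:ℝ) * |hgCoeff a b c0 n| * r ^ (n - 1) := by
            rw [show |hgCoeff a b c0 n| * ((n:ℝ) * |y| ^ (n - 1)) =
              (n:ℝ) * |hgCoeff a b c0 n| * |y| ^ (n - 1) by ring]
            gcongr)
    (y₀ := 0) (by simpa [Real.norm_eq_abs] using (by positivity : (0:ℝ) < r))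
    (by
      have h0 : |(0:ℝ)| < 1 := by norm_num
      exact hgF_summable (a := a) (b := b) hc0 h0)
    hball
  have hs : Summable (fun n : ℕ => hgCoeff a b c0 n * ((n:ℝ) * x ^ (n - 1))) := by
    apply Summable.of_norm_bounded (hgDerivBound_summable (a := a) (b := b) hc0 habs hx)
    intro n
    rw [Real.norm_eq_abs, abs_mul, abs_mul, abs_pow, Nat.abs_cast]
    exact le_of_eq (by ring)
  have hshift := (hasSum_nat_add_iff
      (f := fun n : ℕ => hgCoeff a b c0 n * ((n:ℝ) * x ^ (n - 1)))
      (g := ∑' n : ℕ, hgCoeff a b c0 n * ((n:ℝ) * x ^ (n - 1))) 1).mpr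
      (by simpa using hs.hasSum)
  have hval : hgG a b c0 x =
      ∑' n : ℕ, (fun n : ℕ => hgCoeff a b c0 n * ((n:ℝ) * x ^ (n - 1))) (n + 1) := by
    rw [hgG]
    congr 1
    funext n
    simp only [Nat.add_sub_cancel]
    push_cast
    ring
  rw [show hgF a b c0 = fun y => ∑' k : ℕ, hgCoeff a b c0 k * y ^ k from rfl, hval,
    hshift.tsum_eq]
  exact key

lemma hgG_hasDerivAt (hc0 : 0 < c0) {x : ℝ} (hx : |x| < 1) :
    HasDerivAt (hgG a b c0) (hgH a b c0 x) x := by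
  set r := (|x| + 1) / 2 with hr
  have habs := abs_nonneg x
  have hr0 : 0 ≤ r := by positivity
  have hrx : |x| < r := by rw [hr]; linarith
  have hr1 : r < 1 := by rw [hr]; linarith
  have hball : x ∈ Metric.ball (0:ℝ) r := by
    simpa [Real.norm_eq_abs] using hrx
  have key := hasDerivAt_tsum_of_isPreconnected
    (hgDerivBound2_summable (a := a) (b := b) hc0 hr0 hr1)
    (Metric.isOpen_ball (x := (0:ℝ)) (ε := r))
    ((convex_ball (0:ℝ) r).isPreconnected)
    (g := fun (n : ℕ) (y : ℝ) => ((n:ℝ) + 1) * hgCoeff a b c0 (n + 1) * y ^ n)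
    (g' := fun (n : ℕ) (y : ℝ) => ((n:ℝ) + 1) * hgCoeff a b c0 (n + 1) * ((n:ℝ) * y ^ (n - 1)))
    (fun n y _ => (hasDerivAt_pow n y).const_mul _)
    (fun n y hy => by
      have hyr : |y| ≤ r := by
        have := Metric.mem_ball.1 hy
        rw [Real.dist_eq, sub_zero] at this
        exact this.le
      have hpow : |y| ^ (n - 1) ≤ r ^ (n - 1) := pow_le_pow_left₀ (abs_nonneg y) hyr _
      calc ‖((n:ℝ) + 1) * hgCoeff a b c0 (n + 1) * ((n:ℝ) * y ^ (n - 1))‖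
          = |((n:ℝ) + 1) * hgCoeff a b c0 (n + 1)| * ((n:ℝ) * |y| ^ (n - 1)) := by
            simp only [Real.norm_eq_abs, abs_mul, abs_pow, Nat.abs_cast]
        _ ≤ (n:ℝ) * |((n:ℝ) + 1) * hgCoeff a b c0 (n + 1)| * r ^ (n - 1) := by
            rw [show |((n:ℝ) + 1) * hgCoeff a b c0 (n + 1)| * ((n:ℝ) * |y| ^ (n - 1)) =
              (n:ℝ) * |((n:ℝ) + 1) * hgCoeff a b c0 (n + 1)| * |y| ^ (n - 1) by ring]
            gcongr)
    (y₀ := 0) (by simpa [Real.norm_eq_abs] using (by positivity : (0:ℝ) < r))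
    (by
      have h0 : |(0:ℝ)| < 1 := by norm_num
      exact hgG_summable (a := a) (b := b) hc0 h0)
    hball
  have hs : Summable (fun n : ℕ => ((n:ℝ) + 1) * hgCoeff a b c0 (n + 1) * ((n:ℝ) * x ^ (n - 1))) := by
    apply Summable.of_norm_bounded (hgDerivBound2_summable (a := a) (b := b) hc0 habs hx)
    intro n
    simp only [Real.norm_eq_abs, abs_mul, abs_pow, Nat.abs_cast]
    exact le_of_eq (by ring)
  have hshift := (hasSum_nat_add_iff
      (f := fun n : ℕ => ((n:ℝ) + 1) * hgCoeff a b c0 (n + 1) * ((n:ℝ) * x ^ (n - 1)))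
      (g := ∑' n : ℕ, ((n:ℝ) + 1) * hgCoeff a b c0 (n + 1) * ((n:ℝ) * x ^ (n - 1))) 1).mpr
      (by simpa using hs.hasSum)
  have hval : hgH a b c0 x =
      ∑' n : ℕ, (fun n : ℕ => ((n:ℝ) + 1) * hgCoeff a b c0 (n + 1) * ((n:ℝ) * x ^ (n - 1))) (n + 1) := by
    rw [hgH]
    congr 1
    funext n
    simp only [Nat.add_sub_cancel, show n + 1 + 1 = n + 2 from rfl]
    push_cast
    ring
  rw [show hgG a b c0 = fun y => ∑' k : ℕ, ((k:ℝ) + 1) * hgCoeff a b c0 (k + 1) * y ^ k from rfl,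
    hval, hshift.tsum_eq]
  exact key

lemma hgODE (hc0 : 0 < c0) {x : ℝ} (hx : |x| < 1) :
    x * (1 - x) * hgH a b c0 x + (c0 - (a + b + 1) * x) * hgG a b c0 x
      - a * b * hgF a b c0 x = 0 := by
  have hFs : HasSum (fun k : ℕ => hgCoeff a b c0 k * x ^ k) (hgF a b c0 x) :=
    (hgF_summable hc0 hx).hasSum
  have hGs : HasSum (fun k : ℕ => ((k:ℝ) + 1) * hgCoeff a b c0 (k + 1) * x ^ k) (hgG a b c0 x) :=
    (hgG_summable hc0 hx).hasSum
  have hHs : HasSum (fun k : ℕ => ((k:ℝ) + 1) * ((k:ℝ) + 2) * hgCoeff a b c0 (k + 2) * x ^ k)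
      (hgH a b c0 x) := (hgH_summable hc0 hx).hasSum
  -- T1 : k(k+1) c_{k+1} x^k sums to x * H
  have h1 : HasSum (fun k : ℕ => (k:ℝ) * ((k:ℝ) + 1) * hgCoeff a b c0 (k + 1) * x ^ k)
      (x * hgH a b c0 x) := by
    have hm := hHs.mul_left x
    have he : (fun k : ℕ => x * (((k:ℝ) + 1) * ((k:ℝ) + 2) * hgCoeff a b c0 (k + 2) * x ^ k)) =
        (fun k : ℕ => (fun n : ℕ => (n:ℝ) * ((n:ℝ) + 1) * hgCoeff a b c0 (n + 1) * x ^ n) (k + 1)) := by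
      funext k
      push_cast [show k + 1 + 1 = k + 2 from rfl]
      ring
    rw [he] at hm
    have := (hasSum_nat_add_iff
      (f := fun n : ℕ => (n:ℝ) * ((n:ℝ) + 1) * hgCoeff a b c0 (n + 1) * x ^ n) 1).mp hm
    simpa using this
  -- T2 : k(k-1) c_k x^k sums to x^2 * H
  have h2 : HasSum (fun k : ℕ => (k:ℝ) * ((k:ℝ) - 1) * hgCoeff a b c0 k * x ^ k)
      (x ^ 2 * hgH a b c0 x) := by
    have hm := hHs.mul_left (x ^ 2)
    have he : (fun k : ℕ => x ^ 2 * (((k:ℝ) + 1) * ((k:ℝ) + 2) * hgCoeff a b c0 (k + 2) * x ^ k)) =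
        (fun k : ℕ => (fun n : ℕ => (n:ℝ) * ((n:ℝ) - 1) * hgCoeff a b c0 n * x ^ n) (k + 2)) := by
      funext k
      push_cast
      ring
    rw [he] at hm
    have := (hasSum_nat_add_iff
      (f := fun n : ℕ => (n:ℝ) * ((n:ℝ) - 1) * hgCoeff a b c0 n * x ^ n) 2).mp hm
    simpa [Finset.sum_range_succ] using this
  -- T4 : k c_k x^k sums to x * G
  have h4 : HasSum (fun k : ℕ => (k:ℝ) * hgCoeff a b c0 k * x ^ k) (x * hgG a b c0 x) := by
    have hm := hGs.mul_left x
    have he : (fun k : ℕ => x * (((k:ℝ) + 1) * hgCoeff a b c0 (k + 1) * x ^ k)) =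
        (fun k : ℕ => (fun n : ℕ => (n:ℝ) * hgCoeff a b c0 n * x ^ n) (k + 1)) := by
      funext k
      push_cast
      ring
    rw [he] at hm
    have := (hasSum_nat_add_iff
      (f := fun n : ℕ => (n:ℝ) * hgCoeff a b c0 n * x ^ n) 1).mp hm
    simpa using this
  have h3 := hGs.mul_left c0
  have h4' := h4.mul_left (a + b + 1)
  have h5 := hFs.mul_left (a * b)
  have hA := ((h1.add h3).sub ((h2.add h4').add h5))
  have hzero : (fun k : ℕ =>
      ((k:ℝ) * ((k:ℝ) + 1) * hgCoeff a b c0 (k + 1) * x ^ k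
        + c0 * (((k:ℝ) + 1) * hgCoeff a b c0 (k + 1) * x ^ k))
      - (((k:ℝ) * ((k:ℝ) - 1) * hgCoeff a b c0 k * x ^ k
          + (a + b + 1) * ((k:ℝ) * hgCoeff a b c0 k * x ^ k))
        + a * b * (hgCoeff a b c0 k * x ^ k))) = (fun _ : ℕ => (0:ℝ)) := by
    funext k
    have hrec := hgCoeff_rec (a := a) (b := b) hc0 k
    linear_combination (x ^ k) * hrec
  rw [hzero] at hA
  have htot := hA.unique hasSum_zero
  linear_combination htot

noncomputable def hgPhi (γ ε z : ℝ) : ℝ :=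
  (1 - z) ^ ε * hgF (ε/2) (1 + (ε - γ)/2) (1 - γ/2) (z ^ 2)

noncomputable def hgPhiD (γ ε z : ℝ) : ℝ :=
  -(ε * (1 - z) ^ (ε - 1)) * hgF (ε/2) (1 + (ε - γ)/2) (1 - γ/2) (z ^ 2)
    + 2 * z * (1 - z) ^ ε * hgG (ε/2) (1 + (ε - γ)/2) (1 - γ/2) (z ^ 2)

noncomputable def hgPhiDD (γ ε z : ℝ) : ℝ :=
  ε * (ε - 1) * (1 - z) ^ (ε - 2) * hgF (ε/2) (1 + (ε - γ)/2) (1 - γ/2) (z ^ 2)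
    + 2 * (1 - z) ^ ε * hgG (ε/2) (1 + (ε - γ)/2) (1 - γ/2) (z ^ 2)
    - 4 * ε * z * (1 - z) ^ (ε - 1) * hgG (ε/2) (1 + (ε - γ)/2) (1 - γ/2) (z ^ 2)
    + 4 * z ^ 2 * (1 - z) ^ ε * hgH (ε/2) (1 + (ε - γ)/2) (1 - γ/2) (z ^ 2)

noncomputable def hgPsi (γ ε z : ℝ) : ℝ :=
  (z ^ 2 - 1) * hgPhiD γ ε z - 2 * ε * hgPhi γ ε z

variable {γ ε : ℝ}

lemma hc0_of (hγ : γ < 1) : 0 < 1 - γ/2 := by linarith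

lemma sq_abs_lt {z : ℝ} (h1 : -1 < z) (h2 : z < 1) : |z ^ 2| < 1 := by
  have : |z| < 1 := abs_lt.2 ⟨h1, h2⟩
  calc |z ^ 2| = |z| ^ 2 := by rw [abs_pow]
    _ < 1 := by nlinarith [abs_nonneg z]

lemma hgPhi_hasDerivAt (hγ : γ < 1) {z : ℝ} (h1 : -1 < z) (h2 : z < 1) :
    HasDerivAt (hgPhi γ ε) (hgPhiD γ ε z) z := by
  have h1z : (0:ℝ) < 1 - z := by linarith
  have hx2 := sq_abs_lt h1 h2
  have hz2 : HasDerivAt (fun z : ℝ => z ^ 2) (2 * z) z := by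
    simpa using hasDerivAt_pow 2 z
  have hFz2 : HasDerivAt (fun z : ℝ => hgF (ε/2) (1 + (ε - γ)/2) (1 - γ/2) (z ^ 2))
      (hgG (ε/2) (1 + (ε - γ)/2) (1 - γ/2) (z ^ 2) * (2 * z)) z :=
    HasDerivAt.comp (h₂ := fun y => hgF (ε/2) (1 + (ε - γ)/2) (1 - γ/2) y)
      (h := fun z : ℝ => z ^ 2) z (hgF_hasDerivAt (hc0_of hγ) hx2) hz2
  have hrp : HasDerivAt (fun z : ℝ => (1 - z) ^ ε) (ε * (1 - z) ^ (ε - 1) * -1) z :=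
    (Real.hasDerivAt_rpow_const (Or.inl h1z.ne')).comp z ((hasDerivAt_id z).const_sub 1)
  have h := hrp.mul hFz2
  refine h.congr_deriv ?_
  simp only [hgPhiD]
  ring

lemma hgPhiD_hasDerivAt (hγ : γ < 1) {z : ℝ} (h1 : -1 < z) (h2 : z < 1) :
    HasDerivAt (hgPhiD γ ε) (hgPhiDD γ ε z) z := by
  have h1z : (0:ℝ) < 1 - z := by linarith
  have hx2 := sq_abs_lt h1 h2
  have hz2 : HasDerivAt (fun z : ℝ => z ^ 2) (2 * z) z := by
    simpa using hasDerivAt_pow 2 z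
  have hFz2 : HasDerivAt (fun z : ℝ => hgF (ε/2) (1 + (ε - γ)/2) (1 - γ/2) (z ^ 2))
      (hgG (ε/2) (1 + (ε - γ)/2) (1 - γ/2) (z ^ 2) * (2 * z)) z :=
    HasDerivAt.comp (h₂ := fun y => hgF (ε/2) (1 + (ε - γ)/2) (1 - γ/2) y)
      (h := fun z : ℝ => z ^ 2) z (hgF_hasDerivAt (hc0_of hγ) hx2) hz2
  have hGz2 : HasDerivAt (fun z : ℝ => hgG (ε/2) (1 + (ε - γ)/2) (1 - γ/2) (z ^ 2))
      (hgH (ε/2) (1 + (ε - γ)/2) (1 - γ/2) (z ^ 2) * (2 * z)) z :=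
    HasDerivAt.comp (h₂ := fun y => hgG (ε/2) (1 + (ε - γ)/2) (1 - γ/2) y)
      (h := fun z : ℝ => z ^ 2) z (hgG_hasDerivAt (hc0_of hγ) hx2) hz2
  have hrp : HasDerivAt (fun z : ℝ => (1 - z) ^ ε) (ε * (1 - z) ^ (ε - 1) * -1) z :=
    (Real.hasDerivAt_rpow_const (Or.inl h1z.ne')).comp z ((hasDerivAt_id z).const_sub 1)
  have hrp1 : HasDerivAt (fun z : ℝ => (1 - z) ^ (ε - 1)) ((ε - 1) * (1 - z) ^ (ε - 1 - 1) * -1) z :=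
    (Real.hasDerivAt_rpow_const (Or.inl h1z.ne')).comp z ((hasDerivAt_id z).const_sub 1)
  have hterm1 : HasDerivAt (fun z : ℝ => -(ε * (1 - z) ^ (ε - 1)) *
      hgF (ε/2) (1 + (ε - γ)/2) (1 - γ/2) (z ^ 2))
      (-(ε * ((ε - 1) * (1 - z) ^ (ε - 1 - 1) * -1)) * hgF (ε/2) (1 + (ε - γ)/2) (1 - γ/2) (z ^ 2)
        + -(ε * (1 - z) ^ (ε - 1)) * (hgG (ε/2) (1 + (ε - γ)/2) (1 - γ/2) (z ^ 2) * (2 * z))) z :=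
    (((hrp1.const_mul ε).neg).mul hFz2)
  have h2z : HasDerivAt (fun z : ℝ => 2 * z) 2 z := by
    simpa using (hasDerivAt_id z).const_mul 2
  have hterm2 : HasDerivAt (fun z : ℝ => 2 * z * (1 - z) ^ ε *
      hgG (ε/2) (1 + (ε - γ)/2) (1 - γ/2) (z ^ 2))
      ((2 * (1 - z) ^ ε + 2 * z * (ε * (1 - z) ^ (ε - 1) * -1)) *
          hgG (ε/2) (1 + (ε - γ)/2) (1 - γ/2) (z ^ 2)
        + 2 * z * (1 - z) ^ ε * (hgH (ε/2) (1 + (ε - γ)/2) (1 - γ/2) (z ^ 2) * (2 * z))) z :=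
    ((h2z.mul hrp).mul hGz2)
  have h := hterm1.add hterm2
  have heq : hgPhiD γ ε = fun z : ℝ => -(ε * (1 - z) ^ (ε - 1)) *
      hgF (ε/2) (1 + (ε - γ)/2) (1 - γ/2) (z ^ 2)
      + 2 * z * (1 - z) ^ ε * hgG (ε/2) (1 + (ε - γ)/2) (1 - γ/2) (z ^ 2) := rfl
  rw [heq]
  refine h.congr_deriv ?_
  simp only [hgPhiDD]
  rw [show ε - 1 - 1 = ε - 2 by ring]
  ring

lemma hgPsi_hasDerivAt (hγ : γ < 1) {z : ℝ} (h1 : -1 < z) (h2 : z < 1) :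
    HasDerivAt (hgPsi γ ε)
      (2 * z * hgPhiD γ ε z + (z ^ 2 - 1) * hgPhiDD γ ε z - 2 * ε * hgPhiD γ ε z) z := by
  have ha : HasDerivAt (fun z : ℝ => z ^ 2 - 1) (2 * z) z := by
    simpa using (hasDerivAt_pow 2 z).sub_const 1
  have hb := ha.mul (hgPhiD_hasDerivAt (ε := ε) hγ h1 h2)
  have hc := (hgPhi_hasDerivAt (ε := ε) hγ h1 h2).const_mul (2 * ε)
  have h := hb.sub hc
  have heq : hgPsi γ ε = fun z : ℝ => (z ^ 2 - 1) * hgPhiD γ ε z - 2 * ε * hgPhi γ ε z := rfl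
  rw [heq]
  exact h

lemma hgStar (hγ : γ < 1) {z : ℝ} (h1 : -1 < z) (h2 : z < 1) :
    (1 - γ) * hgPsi γ ε z
      + z * (2 * z * hgPhiD γ ε z + (z ^ 2 - 1) * hgPhiDD γ ε z - 2 * ε * hgPhiD γ ε z)
      + (1 - γ) * ε * hgPhi γ ε z = 0 := by
  have h1z : (0:ℝ) < 1 - z := by linarith
  have hx2 := sq_abs_lt h1 h2
  have hode := hgODE (a := ε/2) (b := 1 + (ε - γ)/2) (hc0_of hγ) (x := z ^ 2) hx2
  have e0 : (1 - z) ^ ε = (1 - z) ^ (ε - 2) * ((1 - z) * (1 - z)) := by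
    rw [show ε = (ε - 2) + 1 + 1 by ring, Real.rpow_add h1z, Real.rpow_add h1z, Real.rpow_one]
    ring_nf
  have e1 : (1 - z) ^ (ε - 1) = (1 - z) ^ (ε - 2) * (1 - z) := by
    rw [show ε - 1 = (ε - 2) + 1 by ring, Real.rpow_add h1z, Real.rpow_one]
  simp only [hgPsi, hgPhiD, hgPhiDD, hgPhi]
  rw [e0, e1]
  linear_combination ((-4) * z * ((1 - z) * (1 - z)) * (1 - z) ^ (ε - 2)) * hode

lemma hgA_hasDerivAt (hγ : γ < 1) {z : ℝ} (hz0 : 0 < z) (hz1 : z < 1) :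
    HasDerivAt (fun y => y ^ (1 - γ) * hgPsi γ ε y)
      ((γ - 1) * ε * (z ^ (-γ) * hgPhi γ ε z)) z := by
  have h := (Real.hasDerivAt_rpow_const (x := z) (p := 1 - γ) (Or.inl hz0.ne')).mul
    (hgPsi_hasDerivAt (ε := ε) hγ (by linarith) hz1)
  refine h.congr_deriv ?_
  have r1 : z ^ (1 - γ - 1) = z ^ (-γ) := by rw [show 1 - γ - 1 = -γ by ring]
  have r2 : z ^ (1 - γ) = z * z ^ (-γ) := by
    rw [show 1 - γ = 1 + -γ by ring, Real.rpow_add hz0, Real.rpow_one]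
  rw [r1, r2]
  linear_combination (z ^ (-γ)) * hgStar (ε := ε) hγ (by linarith : (-1:ℝ) < z) hz1

/-- Let `γ < 1` and `ε` be real and
`F(x) = Σ_k (ε/2)_k (1+(ε−γ)/2)_k / ((1−γ/2)_k k!) x^k` (the Gauss hypergeometric
series `₂F₁(ε/2, 1+(ε−γ)/2; 1−γ/2; x)`).  Then the function
`u(z) = ∫_0^z t^(−γ)(1−t)^ε F(t²) dt` satisfies, for every `z ∈ (0,1)`, the general Heun
equation with `a = −1`, `δ = −ε`, `q = (γ−1)ε` and `αβ = 0`: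
`u'' + (γ/z − ε/(z−1) + ε/(z+1)) u' − (γ−1)ε/(z(z−1)(z+1)) u = 0`. -/
theorem heun_first_fundamental_solution (γ ε : ℝ) (hγ : γ < 1)
    (F : ℝ → ℝ)
    (hF : ∀ x : ℝ, F x = ∑' k : ℕ,
        ((ascPochhammer ℝ k).eval (ε / 2) * (ascPochhammer ℝ k).eval (1 + (ε - γ) / 2))
          / ((ascPochhammer ℝ k).eval (1 - γ / 2) * (k.factorial : ℝ)) * x ^ k)
    (u : ℝ → ℝ)
    (hu : ∀ z : ℝ, u z = ∫ t in (0:ℝ)..z, t ^ (-γ) * (1 - t) ^ ε * F (t ^ 2)) :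
    ∀ z ∈ Set.Ioo (0:ℝ) 1,
      DifferentiableAt ℝ u z ∧ DifferentiableAt ℝ (deriv u) z ∧
      deriv (deriv u) z + (γ / z - ε / (z - 1) + ε / (z + 1)) * deriv u z
        - (γ - 1) * ε / (z * (z - 1) * (z + 1)) * u z = 0 := by
  have hc0 : (0:ℝ) < 1 - γ/2 := by linarith
  have hFeq : F = hgF (ε/2) (1 + (ε - γ)/2) (1 - γ/2) := funext fun x => by
    rw [hF]; rfl
  subst hFeq
  set g : ℝ → ℝ :=
    fun t => t ^ (-γ) * (1 - t) ^ ε * hgF (ε/2) (1 + (ε - γ)/2) (1 - γ/2) (t ^ 2) with hgdef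
  have hgPhi_eq : ∀ t : ℝ, g t = t ^ (-γ) * hgPhi γ ε t := fun t => by
    rw [hgdef]; simp only [hgPhi]; ring
  have hFcont : ∀ t : ℝ, -1 < t → t < 1 →
      ContinuousAt (fun s : ℝ => hgF (ε/2) (1 + (ε - γ)/2) (1 - γ/2) (s ^ 2)) t := by
    intro t h1 h2
    exact ContinuousAt.comp (x := t) (g := hgF (ε/2) (1 + (ε - γ)/2) (1 - γ/2))
      (f := fun s : ℝ => s ^ 2)
      ((hgF_hasDerivAt hc0 (sq_abs_lt h1 h2)).continuousAt)
      ((continuous_pow 2).continuousAt)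
  have hgcontAt : ∀ s ∈ Set.Ioo (0:ℝ) 1, ContinuousAt g s := by
    intro s hs
    have h1 : ContinuousAt (fun t : ℝ => t ^ (-γ)) s :=
      Real.continuousAt_rpow_const s (-γ) (Or.inl hs.1.ne')
    have h2 : ContinuousAt (fun t : ℝ => (1 - t) ^ ε) s :=
      ContinuousAt.comp
        (Real.continuousAt_rpow_const (1 - s) ε (Or.inl (by have := hs.2; intro h; linarith [sub_eq_zero.1 h])))
        ((continuous_const.sub continuous_id).continuousAt)
    have h3 := hFcont s (by linarith [hs.1]) hs.2
    rw [hgdef]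
    exact (h1.mul h2).mul h3
  have hIntOn : ∀ b : ℝ, 0 < b → b < 1 → MeasureTheory.IntegrableOn g (Set.Ioc 0 b) := by
    intro b hb0 hb1
    have hco : ContinuousOn
        (fun t : ℝ => (1 - t) ^ ε * hgF (ε/2) (1 + (ε - γ)/2) (1 - γ/2) (t ^ 2))
        (Set.Icc 0 b) := by
      intro t ht
      apply ContinuousAt.continuousWithinAt
      have h1t : (-1:ℝ) < t := by linarith [ht.1]
      have h2t : t < 1 := lt_of_le_of_lt ht.2 hb1
      exact (ContinuousAt.comp
        (Real.continuousAt_rpow_const (1 - t) ε (Or.inl (by intro h; linarith [sub_eq_zero.1 h])))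
        ((continuous_const.sub continuous_id).continuousAt)).mul (hFcont t h1t h2t)
    obtain ⟨M, hM⟩ := isCompact_Icc.exists_bound_of_continuousOn hco
    have hrint : MeasureTheory.IntegrableOn (fun t : ℝ => M * t ^ (-γ)) (Set.Ioc 0 b) := by
      have h := intervalIntegral.intervalIntegrable_rpow' (a := 0) (b := b) (r := -γ)
        (by linarith)
      rw [intervalIntegrable_iff_integrableOn_Ioc_of_le hb0.le] at h
      exact h.const_mul M
    apply MeasureTheory.Integrable.mono' hrint
    · apply ContinuousOn.aestronglyMeasurable ?_ measurableSet_Ioc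
      intro t ht
      exact (hgcontAt t ⟨ht.1, lt_of_le_of_lt ht.2 hb1⟩).continuousWithinAt
    · rw [MeasureTheory.ae_restrict_iff' measurableSet_Ioc]
      apply Filter.Eventually.of_forall
      intro t ht
      have hrp : (0:ℝ) ≤ t ^ (-γ) := Real.rpow_nonneg ht.1.le _
      have hMt := hM t ⟨ht.1.le, ht.2⟩
      rw [Real.norm_eq_abs] at hMt ⊢
      rw [hgdef]
      calc |t ^ (-γ) * (1 - t) ^ ε * hgF (ε/2) (1 + (ε - γ)/2) (1 - γ/2) (t ^ 2)|
          = t ^ (-γ) * |(1 - t) ^ ε * hgF (ε/2) (1 + (ε - γ)/2) (1 - γ/2) (t ^ 2)| := by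
            rw [mul_assoc, abs_mul, abs_of_nonneg hrp]
        _ ≤ t ^ (-γ) * M := mul_le_mul_of_nonneg_left hMt hrp
        _ = M * t ^ (-γ) := by ring
  have hii : ∀ y ∈ Set.Ioo (0:ℝ) 1, IntervalIntegrable g MeasureTheory.volume 0 y := fun y hy =>
    (intervalIntegrable_iff_integrableOn_Ioc_of_le hy.1.le).mpr (hIntOn y hy.1 hy.2)
  have hcontOn : ContinuousOn g (Set.Ioo 0 1) := fun s hs => (hgcontAt s hs).continuousWithinAt
  have huder : ∀ y ∈ Set.Ioo (0:ℝ) 1, HasDerivAt u (g y) y := by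
    intro y hy
    have hmeas := hcontOn.stronglyMeasurableAtFilter (μ := MeasureTheory.volume) isOpen_Ioo y hy
    have h := intervalIntegral.integral_hasDerivAt_right (hii y hy) hmeas (hgcontAt y hy)
    exact h.congr_of_eventuallyEq (Filter.Eventually.of_forall fun x => hu x)
  intro z hz
  -- the function W and its constancy
  have hWder : ∀ y ∈ Set.Ioo (0:ℝ) 1,
      HasDerivWithinAt (fun y => y ^ (1 - γ) * hgPsi γ ε y - (γ - 1) * ε * u y) 0
        (Set.Ioo 0 1) y := by
    intro y hy
    have h1 := hgA_hasDerivAt (ε := ε) hγ hy.1 hy.2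
    have h2 := (huder y hy).const_mul ((γ - 1) * ε)
    have h := h1.sub h2
    have hv : (γ - 1) * ε * (y ^ (-γ) * hgPhi γ ε y) - (γ - 1) * ε * g y = 0 := by
      rw [hgPhi_eq y]; ring
    rw [hv] at h
    exact h.hasDerivWithinAt
  have hWconst : ∀ y ∈ Set.Ioo (0:ℝ) 1,
      (fun y => y ^ (1 - γ) * hgPsi γ ε y - (γ - 1) * ε * u y) y
        = (fun y => y ^ (1 - γ) * hgPsi γ ε y - (γ - 1) * ε * u y) z := by
    intro y hy
    have hb := Convex.norm_image_sub_le_of_norm_hasDerivWithin_le (C := (0:ℝ)) (f' := fun _ : ℝ => (0:ℝ))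
      hWder (fun x _ => by simp) (convex_Ioo 0 1) hz hy
    rw [zero_mul] at hb
    have h0 : ‖(fun y => y ^ (1 - γ) * hgPsi γ ε y - (γ - 1) * ε * u y) y
        - (fun y => y ^ (1 - γ) * hgPsi γ ε y - (γ - 1) * ε * u y) z‖ = 0 :=
      le_antisymm hb (norm_nonneg _)
    have := norm_eq_zero.1 h0
    exact sub_eq_zero.1 this
  have hlim : Filter.Tendsto (fun y => y ^ (1 - γ) * hgPsi γ ε y - (γ - 1) * ε * u y)
      (nhdsWithin 0 (Set.Ioi (0:ℝ))) (nhds 0) := by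
    have hA : Filter.Tendsto (fun y : ℝ => y ^ (1 - γ) * hgPsi γ ε y)
        (nhdsWithin 0 (Set.Ioi (0:ℝ))) (nhds 0) := by
      have hrp : Filter.Tendsto (fun y : ℝ => y ^ (1 - γ)) (nhds 0) (nhds 0) := by
        have h := (Real.continuousAt_rpow_const 0 (1 - γ) (Or.inr (by linarith))).tendsto
        rwa [Real.zero_rpow (by linarith : (1:ℝ) - γ ≠ 0)] at h
      have hψ : ContinuousAt (hgPsi γ ε) 0 :=
        (hgPsi_hasDerivAt (ε := ε) hγ (by norm_num) (by norm_num)).continuousAt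
      have h := hrp.mul hψ.tendsto
      rw [zero_mul] at h
      exact h.mono_left nhdsWithin_le_nhds
    have hu0 : Filter.Tendsto u (nhdsWithin 0 (Set.Ioi (0:ℝ))) (nhds 0) := by
      have hIcc : MeasureTheory.IntegrableOn g (Set.Icc 0 (1/2)) := by
        rw [integrableOn_Icc_iff_integrableOn_Ioc]
        exact hIntOn (1/2) (by norm_num) (by norm_num)
      have hco := intervalIntegral.continuousOn_primitive (f := g) (a := 0) (b := 1/2) hIcc
      have hcw : ContinuousWithinAt (fun x => ∫ t in Set.Ioc (0:ℝ) x, g t) (Set.Icc 0 (1/2)) 0 :=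
        hco 0 (by constructor <;> norm_num)
      have h0 : (∫ t in Set.Ioc (0:ℝ) (0:ℝ), g t) = 0 := by simp
      have ht : Filter.Tendsto (fun x => ∫ t in Set.Ioc (0:ℝ) x, g t)
          (nhdsWithin 0 (Set.Ioo (0:ℝ) (1/2))) (nhds 0) := by
        have h := hcw.tendsto
        rw [h0] at h
        exact h.mono_left (nhdsWithin_mono 0 Set.Ioo_subset_Icc_self)
      have hteq : Filter.Tendsto u (nhdsWithin 0 (Set.Ioo (0:ℝ) (1/2))) (nhds 0) := by
        refine ht.congr' ?_
        filter_upwards [self_mem_nhdsWithin] with y hy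
        rw [hu y, intervalIntegral.integral_of_le hy.1.le]
      rwa [nhdsWithin_Ioo_eq_nhdsGT (by norm_num : (0:ℝ) < 1/2)] at hteq
    have h := hA.sub (hu0.const_mul ((γ - 1) * ε))
    simpa using h
  have hW0 : z ^ (1 - γ) * hgPsi γ ε z - (γ - 1) * ε * u z = 0 := by
    have h1 : Filter.Tendsto (fun y => y ^ (1 - γ) * hgPsi γ ε y - (γ - 1) * ε * u y)
        (nhdsWithin 0 (Set.Ioi (0:ℝ)))
        (nhds (z ^ (1 - γ) * hgPsi γ ε z - (γ - 1) * ε * u z)) := by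
      refine Filter.Tendsto.congr' ?_ tendsto_const_nhds
      filter_upwards [Ioo_mem_nhdsGT_of_mem
        (show (0:ℝ) ∈ Set.Ico (0:ℝ) 1 by constructor <;> norm_num)] with y hy
      exact (hWconst y hy).symm
    exact tendsto_nhds_unique h1 hlim
  have hder_u : deriv u z = g z := (huder z hz).deriv
  have hloc : deriv u =ᶠ[nhds z] g := by
    filter_upwards [isOpen_Ioo.mem_nhds hz] with y hy
    exact (huder y hy).deriv
  have hgder : HasDerivAt g (-γ * z ^ (-γ - 1) * hgPhi γ ε z + z ^ (-γ) * hgPhiD γ ε z) z := by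
    have h := (Real.hasDerivAt_rpow_const (x := z) (p := -γ) (Or.inl hz.1.ne')).mul
      (hgPhi_hasDerivAt (ε := ε) hγ (by linarith [hz.1]) hz.2)
    have heq : g = fun y => y ^ (-γ) * hgPhi γ ε y := funext hgPhi_eq
    rw [heq]
    exact h
  have hdd : deriv (deriv u) z
      = -γ * z ^ (-γ - 1) * hgPhi γ ε z + z ^ (-γ) * hgPhiD γ ε z := by
    rw [hloc.deriv_eq]
    exact hgder.deriv
  refine ⟨(huder z hz).differentiableAt, ?_, ?_⟩
  · exact (Filter.EventuallyEq.differentiableAt_iff hloc).mpr hgder.differentiableAt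
  · rw [hdd, hder_u, hgPhi_eq z]
    have hz0 := hz.1
    have hz1 := hz.2
    have hne1 : z - 1 ≠ 0 := by intro h; rw [sub_eq_zero] at h; linarith
    have hne2 : z + 1 ≠ 0 := by positivity
    have hne0 : z ≠ 0 := hz0.ne'
    have r1 : z ^ (-γ) = z * z ^ (-γ - 1) := by
      have h := Real.rpow_add hz0 1 (-γ - 1)
      rw [Real.rpow_one] at h
      rw [show (1 + (-γ - 1) : ℝ) = -γ by ring] at h
      exact h
    have r2 : z ^ (1 - γ) = z ^ 2 * z ^ (-γ - 1) := by
      have h := Real.rpow_add hz0 2 (-γ - 1)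
      rw [show ((2 : ℝ) + (-γ - 1)) = 1 - γ by ring] at h
      rw [show (2:ℝ) = ((2:ℕ):ℝ) by norm_num, Real.rpow_natCast] at h
      exact h
    rw [r2] at hW0
    simp only [hgPsi] at hW0
    rw [r1]
    field_simp
    linear_combination hW0
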